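/- On ℝ³ with coordinates (x, y, z), let g be the Lorentzian metric g = dx dy + (dz − x dy)²; explicitly, g at the point with x-coordinate x sends vectors a, b ∈ ℝ³ to ½(a_x b_y + a_y b_x) + (a_z − x a_y)(b_z − x b_y). Then the real vector space of smooth conformal Killing fields of g on ℝ³ is finite-dimensional of dimension exactly 4; it is spanned by the Killing fields ∂_y, ∂_z, ∂_x + y ∂_z, and x ∂_x − y ∂_y. -/

import Mathlib

open scoped BigOperators

noncomputable section

/-- Points/vectors of `ℝⁿ`. -/
abbrev Vec (n : ℕ) := Fin n → ℝ

/-- Evaluation of a metric (given by its component functions `g p i j`) as a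
bilinear form at `p`. -/
def metricEval {n : ℕ} (g : Vec n → Fin n → Fin n → ℝ) (p : Vec n) (u v : Vec n) : ℝ :=
  ∑ i, ∑ j, u i * g p i j * v j

/-- The Lie derivative equation `L_X g = f · g` holds at every point of `U`:
`(D_p g)(X(p))(u,v) + g(p)(D_p X(u), v) + g(p)(u, D_p X(v)) = f(p) · g(p)(u,v)`. -/
def LieDerivEq {n : ℕ} (U : Set (Vec n)) (g : Vec n → Fin n → Fin n → ℝ)
    (X : Vec n → Vec n) (f : Vec n → ℝ) : Prop :=
  ∀ p ∈ U, ∀ u v : Vec n,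
    (∑ i, ∑ j, u i * fderiv ℝ (fun q => g q i j) p (X p) * v j)
      + metricEval g p (fderiv ℝ X p u) v + metricEval g p u (fderiv ℝ X p v)
      = f p * metricEval g p u v

/-- A smooth conformal Killing field of `g` on `U`. -/
def IsConformalKillingOn {n : ℕ} (U : Set (Vec n)) (g : Vec n → Fin n → Fin n → ℝ)
    (X : Vec n → Vec n) : Prop :=
  ContDiffOn ℝ (⊤ : ℕ∞) X U ∧ ∃ f : Vec n → ℝ, LieDerivEq U g X f

/-- A smooth Killing field of `g` on `U` (`L_X g = 0`). -/
def IsKillingOn {n : ℕ} (U : Set (Vec n)) (g : Vec n → Fin n → Fin n → ℝ)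
    (X : Vec n → Vec n) : Prop :=
  ContDiffOn ℝ (⊤ : ℕ∞) X U ∧ LieDerivEq U g X fun _ => 0

/-- A smooth homothety of `g` on `U` (`L_X g = c · g` with `c` a nonzero constant). -/
def IsHomothetyOn {n : ℕ} (U : Set (Vec n)) (g : Vec n → Fin n → Fin n → ℝ)
    (X : Vec n → Vec n) : Prop :=
  ContDiffOn ℝ (⊤ : ℕ∞) X U ∧ ∃ c : ℝ, c ≠ 0 ∧ LieDerivEq U g X fun _ => c

/-- The bilinear form of the Lorentzian metric `dx dy + (dz − x dy)²`
on `ℝ³` with coordinates `(x, y, z)` (indices `0,1,2`). -/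
def lor3Form (x a b : Vec 3) : ℝ :=
  (1 / 2) * (a 0 * b 1 + a 1 * b 0) + (a 2 - x 0 * a 1) * (b 2 - x 0 * b 1)

/-- Components of the metric `dx dy + (dz − x dy)²`. -/
def lor3Metric (x : Vec 3) (i j : Fin 3) : ℝ := lor3Form x (Pi.single i 1) (Pi.single j 1)

/-- `∂_y`. -/
def lor3X1 : Vec 3 → Vec 3 := fun _ => ![0, 1, 0]
/-- `∂_z`. -/
def lor3X2 : Vec 3 → Vec 3 := fun _ => ![0, 0, 1]
/-- `∂_x + y ∂_z`. -/
def lor3X3 : Vec 3 → Vec 3 := fun x => ![1, 0, x 1]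
/-- `x ∂_x − y ∂_y`. -/
def lor3X4 : Vec 3 → Vec 3 := fun x => ![x 0, -x 1, 0]

/-- The four fields. -/
def lor3Basis : Fin 4 → (Vec 3 → Vec 3) := ![lor3X1, lor3X2, lor3X3, lor3X4]


section Aux

def ee (i : Fin 3) : Vec 3 := Pi.single i 1

def pd (i : Fin 3) (f : Vec 3 → ℝ) : Vec 3 → ℝ := fun p => fderiv ℝ f p (ee i)

lemma ContDiff.pd' {f : Vec 3 → ℝ} (hf : ContDiff ℝ (⊤:ℕ∞) f) (i : Fin 3) :
    ContDiff ℝ (⊤:ℕ∞) (pd i f) := by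
  have h : ContDiff ℝ (⊤:ℕ∞) (fderiv ℝ f) := hf.fderiv_right (by exact_mod_cast le_refl _)
  exact h.clm_apply contDiff_const

lemma pd_comm {f : Vec 3 → ℝ} (hf : ContDiff ℝ (⊤:ℕ∞) f) (i j : Fin 3) (p : Vec 3) :
    pd i (pd j f) p = pd j (pd i f) p := by
  have hd : Differentiable ℝ f := hf.differentiable (by simp)
  have hf' : ContDiff ℝ (⊤:ℕ∞) (fderiv ℝ f) := hf.fderiv_right (by exact_mod_cast le_refl _)
  have h2 : HasFDerivAt (fderiv ℝ f) (fderiv ℝ (fderiv ℝ f) p) p :=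
    ((hf'.differentiable (by simp)) p).hasFDerivAt
  have key := second_derivative_symmetric (f' := fderiv ℝ f)
    (fun y => (hd y).hasFDerivAt) h2 (ee j) (ee i)
  have e1 : ∀ c : Vec 3, fderiv ℝ (fun q => fderiv ℝ f q c) p
      = (fderiv ℝ (fderiv ℝ f) p).flip c := by
    intro c
    rw [fderiv_clm_apply ((hf'.differentiable (by simp)) p) (differentiableAt_const c)]
    simp
  show fderiv ℝ (fun q => fderiv ℝ f q (ee j)) p (ee i)
      = fderiv ℝ (fun q => fderiv ℝ f q (ee i)) p (ee j)
  rw [e1, e1]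
  simpa using key.symm

lemma diffable {f : Vec 3 → ℝ} (hf : ContDiff ℝ (⊤:ℕ∞) f) : Differentiable ℝ f :=
  hf.differentiable (by simp)

lemma pd_add {f g : Vec 3 → ℝ} {p : Vec 3} (i : Fin 3) (hf : DifferentiableAt ℝ f p)
    (hg : DifferentiableAt ℝ g p) :
    pd i (fun q => f q + g q) p = pd i f p + pd i g p := by
  simp [pd, fderiv_fun_add hf hg]

lemma pd_sub {f g : Vec 3 → ℝ} {p : Vec 3} (i : Fin 3) (hf : DifferentiableAt ℝ f p)
    (hg : DifferentiableAt ℝ g p) :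
    pd i (fun q => f q - g q) p = pd i f p - pd i g p := by
  simp [pd, fderiv_fun_sub hf hg]

lemma pd_neg {f : Vec 3 → ℝ} {p : Vec 3} (i : Fin 3) :
    pd i (fun q => -f q) p = -pd i f p := by
  simp [pd, fderiv_neg]

lemma pd_mul {f g : Vec 3 → ℝ} {p : Vec 3} (i : Fin 3) (hf : DifferentiableAt ℝ f p)
    (hg : DifferentiableAt ℝ g p) :
    pd i (fun q => f q * g q) p = f p * pd i g p + pd i f p * g p := by
  simp [pd, fderiv_fun_mul hf hg]; ring

lemma pd_const_mul {f : Vec 3 → ℝ} {p : Vec 3} (i : Fin 3) (c : ℝ) (hf : DifferentiableAt ℝ f p) :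
    pd i (fun q => c * f q) p = c * pd i f p := by
  simp [pd, fderiv_const_mul hf c]

lemma pd_const (i : Fin 3) (c : ℝ) (p : Vec 3) : pd i (fun _ => c) p = 0 := by
  simp [pd]

lemma pd_coord (i j : Fin 3) (p : Vec 3) : pd i (fun q => q j) p = ee i j := by
  have h : (fun q : Vec 3 => q j) = (ContinuousLinearMap.proj j : (Fin 3 → ℝ) →L[ℝ] ℝ) := rfl
  rw [pd, h, ContinuousLinearMap.fderiv]; rfl

-- test
example (F : Vec 3 → ℝ) (hF : ContDiff ℝ (⊤:ℕ∞) F) (p : Vec 3) :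
    pd 0 (fun q => 2*q 0*F q + pd 1 F q) p
      = 2*F p + 2*p 0*pd 0 F p + pd 0 (pd 1 F) p := by
  have d1 : Differentiable ℝ F := diffable hF
  have d2 : Differentiable ℝ (pd 1 F) := diffable (hF.pd' 1)
  rw [pd_add 0 (by fun_prop) (by fun_prop), pd_mul 0 (by fun_prop) (by fun_prop)]
  rw [pd_const_mul 0 2 (by fun_prop)]
  rw [pd_coord]
  simp [ee, Pi.single]
  ring


lemma pd_sq (i j : Fin 3) (p : Vec 3) : pd i (fun q => q j ^ 2) p = 2 * p j * ee i j := by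
  have h : (fun q : Vec 3 => q j ^ 2) = (fun q : Vec 3 => q j * q j) := by funext q; ring
  rw [h, pd_mul i (by fun_prop) (by fun_prop), pd_coord]; ring

lemma pd_cube (i j : Fin 3) (p : Vec 3) : pd i (fun q => q j ^ 3) p = 3 * p j ^ 2 * ee i j := by
  have h : (fun q : Vec 3 => q j ^ 3) = (fun q : Vec 3 => q j ^ 2 * q j) := by funext q; ring
  rw [h, pd_mul i (by fun_prop) (by fun_prop), pd_coord, pd_sq]; ring

-- test simp with discharger

lemma pd_of_zero_fn {f : Vec 3 → ℝ} (h : ∀ p, f p = 0) (i : Fin 3) (p : Vec 3) :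
    pd i f p = 0 := by
  have : f = fun _ => 0 := funext h
  rw [this, pd_const]

lemma const_of_pd_zero {f : Vec 3 → ℝ} (hf : ContDiff ℝ (⊤:ℕ∞) f)
    (h : ∀ i p, pd i f p = 0) (p : Vec 3) : f p = f 0 := by
  apply is_const_of_fderiv_eq_zero (diffable hf)
  intro x
  ext u
  have hu : u = ∑ i, u i • ee i := by
    funext j
    fin_cases j <;> simp [ee, Pi.single_apply, Fin.sum_univ_three]
  rw [hu]
  simp only [map_sum, map_smul]
  have : ∀ i, fderiv ℝ f x (ee i) = 0 := fun i => h i x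
  simp [this]

-- The heart of the matter
lemma struct (A B C : Vec 3 → ℝ) (hA : ContDiff ℝ (⊤:ℕ∞) A) (hB : ContDiff ℝ (⊤:ℕ∞) B)
    (hC : ContDiff ℝ (⊤:ℕ∞) C)
    (e1 : ∀ p, pd 0 B p = 0)
    (e3 : ∀ p, pd 0 C p = -(1/2) * pd 2 B p)
    (est : ∀ p, pd 0 A p = -3*p 0*pd 2 B p - pd 1 B p + 2*pd 2 C p)
    (ess : ∀ p, 2*p 0*A p + pd 1 A p + 2*(p 0)^2*pd 1 B p - 2*p 0*pd 1 C p
      + 2*(p 0)^3*pd 2 B p - 2*(p 0)^2*pd 2 C p = 0)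
    (esss : ∀ p, -A p - p 0*pd 1 B p + pd 1 C p + (1/2)*pd 2 A p - (p 0)^2*pd 2 B p
      + p 0*pd 2 C p = 0) :
    ∃ β γ b0 c0 : ℝ, ∀ p : Vec 3,
      A p = γ - β*p 0 ∧ B p = b0 + β*p 1 ∧ C p = c0 + γ*p 1 := by
  -- differentiability stash
  have dA : Differentiable ℝ A := diffable hA
  have dB : Differentiable ℝ B := diffable hB
  have dC : Differentiable ℝ C := diffable hC
  have dA0 : Differentiable ℝ (pd 0 A) := diffable (hA.pd' 0)
  have dA1 : Differentiable ℝ (pd 1 A) := diffable (hA.pd' 1)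
  have dA2 : Differentiable ℝ (pd 2 A) := diffable (hA.pd' 2)
  have dB1 : Differentiable ℝ (pd 1 B) := diffable (hB.pd' 1)
  have dB2 : Differentiable ℝ (pd 2 B) := diffable (hB.pd' 2)
  have dC1 : Differentiable ℝ (pd 1 C) := diffable (hC.pd' 1)
  have dC2 : Differentiable ℝ (pd 2 C) := diffable (hC.pd' 2)
  have dA01 : Differentiable ℝ (pd 0 (pd 1 A)) := diffable ((hA.pd' 1).pd' 0)
  have dB12 : Differentiable ℝ (pd 1 (pd 2 B)) := diffable ((hB.pd' 2).pd' 1)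
  have dB22 : Differentiable ℝ (pd 2 (pd 2 B)) := diffable ((hB.pd' 2).pd' 2)
  have dA21 : Differentiable ℝ (pd 2 (pd 1 A)) := diffable ((hA.pd' 1).pd' 2)
  -- derivatives of Bx ≡ 0: pd i (pd 0 B) = 0 and pd 0 (pd i B) = 0
  have hB0 : ∀ i p, pd i (pd 0 B) p = 0 := fun i p => pd_of_zero_fn e1 i p
  have hB0' : ∀ i p, pd 0 (pd i B) p = 0 := fun i p => (pd_comm hB 0 i p).trans (hB0 i p)
  -- derivatives of e3 : Cx = -(1/2) Bz
  have e3' : pd 0 C = fun p => -(1/2) * pd 2 B p := funext e3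
  have hC0 : ∀ i p, pd i (pd 0 C) p = -(1/2) * pd i (pd 2 B) p := by
    intro i p
    rw [e3']
    exact pd_const_mul i _ (by fun_prop)
  have hC0' : ∀ i p, pd 0 (pd i C) p = -(1/2) * pd i (pd 2 B) p := by
    intro i p
    rw [pd_comm hC 0 i p]
    exact hC0 i p
  -- Axx = -3 Bz - Bzz   (differentiate est along e0)
  have est' : pd 0 A = fun q => -3*q 0*pd 2 B q - pd 1 B q + 2*pd 2 C q := funext est
  have hAxx : ∀ p, pd 0 (pd 0 A) p = -3*pd 2 B p - pd 2 (pd 2 B) p := by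
    intro p
    rw [est']
    simp (disch := fun_prop) only [pd_add, pd_sub, pd_mul, pd_const_mul, pd_const, pd_coord]
    rw [hB0' 2 p, hB0' 1 p, hC0' 2 p]
    simp [ee]
    ring
  have dB122 : Differentiable ℝ (pd 1 (pd 2 (pd 2 B))) := diffable (((hB.pd' 2).pd' 2).pd' 1)
  have hB02f : pd 0 (pd 2 B) = fun _ => 0 := funext (hB0' 2)
  have hB01f : pd 0 (pd 1 B) = fun _ => 0 := funext (hB0' 1)
  -- P1 := ∂x of ess
  have essf : (fun q => 2*q 0*A q + pd 1 A q + 2*(q 0)^2*pd 1 B q - 2*q 0*pd 1 C q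
      + 2*(q 0)^3*pd 2 B q - 2*(q 0)^2*pd 2 C q) = fun _ => (0:ℝ) := funext ess
  have P1 : ∀ p, 2*A p + 2*p 0*pd 0 A p + pd 0 (pd 1 A) p + 4*p 0*pd 1 B p - 2*pd 1 C p
      + p 0*pd 1 (pd 2 B) p + 6*(p 0)^2*pd 2 B p - 4*p 0*pd 2 C p
      + (p 0)^2*pd 2 (pd 2 B) p = 0 := by
    intro p
    have h := congrFun (congrArg (pd 0) essf) p
    rw [pd_const] at h
    simp (disch := fun_prop) only [pd_add, pd_sub, pd_mul, pd_const_mul, pd_const, pd_coord,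
      pd_sq, pd_cube] at h
    rw [hB0' 1 p, hC0' 1 p, hB0' 2 p, hC0' 2 p] at h
    simp [ee] at h
    linear_combination h
  -- P2 := ∂x of P1, ⇒ Q
  have hAxxf : pd 0 (pd 0 A) = fun p => -3*pd 2 B p - pd 2 (pd 2 B) p := funext hAxx
  have swap01A : pd 0 (pd 1 A) = pd 1 (pd 0 A) := funext (pd_comm hA 0 1)
  have hzzx : ∀ p, pd 0 (pd 2 (pd 2 B)) p = 0 := by
    intro p
    rw [pd_comm (hB.pd' 2) 0 2 p, hB02f, pd_const]
  have hzyx : ∀ p, pd 0 (pd 1 (pd 2 B)) p = 0 := by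
    intro p
    rw [pd_comm (hB.pd' 2) 0 1 p, hB02f, pd_const]
  have hA001 : ∀ p, pd 0 (pd 0 (pd 1 A)) p
      = -3*pd 1 (pd 2 B) p - pd 1 (pd 2 (pd 2 B)) p := by
    intro p
    rw [swap01A, pd_comm (hA.pd' 0) 0 1 p, hAxxf]
    simp (disch := fun_prop) only [pd_sub, pd_const_mul]
  have P1f : (fun q => 2*A q + 2*q 0*pd 0 A q + pd 0 (pd 1 A) q + 4*q 0*pd 1 B q - 2*pd 1 C q
      + q 0*pd 1 (pd 2 B) q + 6*(q 0)^2*pd 2 B q - 4*q 0*pd 2 C q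
      + (q 0)^2*pd 2 (pd 2 B) q) = fun _ => (0:ℝ) := funext P1
  have Q : ∀ p, -6*p 0*pd 2 B p + 4*pd 2 C p + 2*p 0*pd 2 (pd 2 B) p
      - pd 1 (pd 2 B) p - pd 1 (pd 2 (pd 2 B)) p = 0 := by
    intro p
    have h := congrFun (congrArg (pd 0) P1f) p
    rw [pd_const] at h
    simp (disch := fun_prop) only [pd_add, pd_sub, pd_mul, pd_const_mul, pd_const, pd_coord,
      pd_sq, pd_cube] at h
    rw [hB0' 1 p, hC0' 1 p, hB0' 2 p, hC0' 2 p, hA001 p, hzzx p, hzyx p, hAxx p, est p] at h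
    simp [ee] at h
    linear_combination h
  -- ∂x of Q gives Bz = 0
  have Qf : (fun q => -6*q 0*pd 2 B q + 4*pd 2 C q + 2*q 0*pd 2 (pd 2 B) q
      - pd 1 (pd 2 B) q - pd 1 (pd 2 (pd 2 B)) q) = fun _ => (0:ℝ) := funext Q
  have hBz : ∀ p, pd 2 B p = 0 := by
    intro p
    have h := congrFun (congrArg (pd 0) Qf) p
    rw [pd_const] at h
    simp (disch := fun_prop) only [pd_add, pd_sub, pd_mul, pd_const_mul, pd_const, pd_coord,
      pd_sq, pd_cube] at h
    have hzzyx : pd 0 (pd 1 (pd 2 (pd 2 B))) p = 0 := by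
      rw [pd_comm ((hB.pd' 2).pd' 2) 0 1 p, funext hzzx, pd_const]
    rw [hB0' 2 p, hC0' 2 p, hzzx p, hzyx p, hzzyx] at h
    simp [ee] at h
    linarith
  have hBzd : ∀ i p, pd i (pd 2 B) p = 0 := fun i p => pd_of_zero_fn hBz i p
  have hBzd' : ∀ i p, pd 2 (pd i B) p = 0 := fun i p => (pd_comm hB 2 i p).trans (hBzd i p)
  have hCx : ∀ p, pd 0 C p = 0 := fun p => by rw [e3 p, hBz p]; ring
  have hCxd : ∀ i p, pd i (pd 0 C) p = 0 := fun i p => pd_of_zero_fn hCx i p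
  have hCxd' : ∀ i p, pd 0 (pd i C) p = 0 := fun i p => (pd_comm hC 0 i p).trans (hCxd i p)
  -- Cz = 0 from Q
  have hCz : ∀ p, pd 2 C p = 0 := by
    intro p
    have h := Q p
    rw [hBz p, hBzd 2 p, hBzd 1 p, pd_of_zero_fn (hBzd 2) 1 p] at h
    linarith
  have hCzd : ∀ i p, pd i (pd 2 C) p = 0 := fun i p => pd_of_zero_fn hCz i p
  have hCzd' : ∀ i p, pd 2 (pd i C) p = 0 := fun i p => (pd_comm hC 2 i p).trans (hCzd i p)
  -- Ax = -By
  have hAx : ∀ p, pd 0 A p = -pd 1 B p := by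
    intro p; rw [est p, hBz p, hCz p]; ring
  have hAxf : pd 0 A = fun p => -pd 1 B p := funext hAx
  -- T := ∂z of ess
  have T : ∀ p, 2*p 0*pd 2 A p + pd 2 (pd 1 A) p = 0 := by
    intro p
    have h := congrFun (congrArg (pd 2) essf) p
    rw [pd_const] at h
    simp (disch := fun_prop) only [pd_add, pd_sub, pd_mul, pd_const_mul, pd_const, pd_coord,
      pd_sq, pd_cube] at h
    rw [hBzd' 1 p, hCzd' 1 p, hBzd 2 p, hCzd 2 p] at h
    simp [ee] at h
    linear_combination h
  have Tf : (fun q => 2*q 0*pd 2 A q + pd 2 (pd 1 A) q) = fun _ => (0:ℝ) := funext T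
  -- ∂x of T gives Az = 0
  have hAz : ∀ p, pd 2 A p = 0 := by
    intro p
    have dB11 : Differentiable ℝ (pd 1 (pd 1 B)) := diffable ((hB.pd' 1).pd' 1)
    have h := congrFun (congrArg (pd 0) Tf) p
    rw [pd_const] at h
    simp (disch := fun_prop) only [pd_add, pd_sub, pd_mul, pd_const_mul, pd_const, pd_coord,
      pd_sq, pd_cube] at h
    have h1 : pd 0 (pd 2 A) p = 0 := by
      rw [pd_comm hA 0 2 p, hAxf, pd_neg 2, hBzd' 1 p, neg_zero]
    have hfn : pd 0 (pd 1 A) = fun q => -(pd 1 (pd 1 B) q) := by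
      funext q
      rw [swap01A, hAxf, pd_neg 1]
    have h2 : pd 0 (pd 2 (pd 1 A)) p = 0 := by
      rw [pd_comm (hA.pd' 1) 0 2 p, hfn, pd_neg 2, pd_comm (hB.pd' 1) 2 1 p,
        pd_of_zero_fn (hBzd' 1) 1 p, neg_zero]
    rw [h1, h2] at h
    simp [ee] at h
    linarith
  -- R : -A - x·By + Cy = 0
  have R : ∀ p, -A p - p 0*pd 1 B p + pd 1 C p = 0 := by
    intro p
    have h := esss p
    rw [hAz p, hBz p, hCz p] at h
    linear_combination h
  -- Ay = 0
  have hAy : ∀ p, pd 1 A p = 0 := by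
    intro p
    have h := ess p
    rw [hBz p, hCz p] at h
    linear_combination h + 2*p 0*(R p)
  -- Byy = 0
  have hByy : ∀ p, pd 1 (pd 1 B) p = 0 := by
    intro p
    have h1 : pd 1 (pd 0 A) p = 0 := by
      rw [pd_comm hA 1 0 p, pd_of_zero_fn hAy 0 p]
    rw [hAxf, pd_neg 1] at h1
    linarith
  -- Cyy = 0
  have hCyy : ∀ p, pd 1 (pd 1 C) p = 0 := by
    intro p
    have Rf : (fun q => -A q - q 0*pd 1 B q + pd 1 C q) = fun _ => (0:ℝ) := funext R
    have h := congrFun (congrArg (pd 1) Rf) p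
    rw [pd_const] at h
    simp (disch := fun_prop) only [pd_neg, pd_add, pd_sub, pd_mul, pd_const_mul, pd_const,
      pd_coord, pd_sq, pd_cube] at h
    rw [hAy p, hByy p] at h
    simp [ee] at h
    linarith
  -- By and Cy are constant
  have hByconst : ∀ p, pd 1 B p = pd 1 B 0 := by
    apply const_of_pd_zero (hB.pd' 1)
    intro i p
    fin_cases i
    · exact hB0' 1 p
    · exact hByy p
    · exact hBzd' 1 p
  have hCyconst : ∀ p, pd 1 C p = pd 1 C 0 := by
    apply const_of_pd_zero (hC.pd' 1)
    intro i p
    fin_cases i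
    · exact hCxd' 1 p
    · exact hCyy p
    · exact hCzd' 1 p
  refine ⟨pd 1 B 0, pd 1 C 0, B 0, C 0, fun p => ⟨?_, ?_, ?_⟩⟩
  · -- A p = γ - β x
    have key : ∀ p : Vec 3, A p + pd 1 B 0 * p 0 = A 0 + pd 1 B 0 * (0:Vec 3) 0 := by
      have hAf : ContDiff ℝ (⊤:ℕ∞) (fun q : Vec 3 => A q + pd 1 B 0 * q 0) :=
        hA.add (contDiff_const.mul ((ContinuousLinearMap.proj 0 : Vec 3 →L[ℝ] ℝ).contDiff))
      apply const_of_pd_zero hAf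
      intro i p
      have hd : DifferentiableAt ℝ (fun q : Vec 3 => pd 1 B 0 * q 0) p := by fun_prop
      rw [pd_add i (dA p) hd, pd_const_mul i _ (by fun_prop), pd_coord]
      fin_cases i
      · show pd 0 A p + pd 1 B 0 * ee 0 0 = 0
        rw [hAx p, hByconst p]; simp [ee]
      · show pd 1 A p + pd 1 B 0 * ee 1 0 = 0
        rw [hAy p]; simp [ee]
      · show pd 2 A p + pd 1 B 0 * ee 2 0 = 0
        rw [hAz p]; simp [ee]
    have hA0 : A 0 = pd 1 C 0 := by
      have h := R 0
      simp at h
      linarith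
    have := key p
    simp at this
    rw [hA0] at this
    linarith
  · -- B p = b0 + β y
    have key : ∀ p : Vec 3, B p - pd 1 B 0 * p 1 = B 0 - pd 1 B 0 * (0:Vec 3) 1 := by
      have hBf : ContDiff ℝ (⊤:ℕ∞) (fun q : Vec 3 => B q - pd 1 B 0 * q 1) :=
        hB.sub (contDiff_const.mul ((ContinuousLinearMap.proj 1 : Vec 3 →L[ℝ] ℝ).contDiff))
      apply const_of_pd_zero hBf
      intro i p
      have hd : DifferentiableAt ℝ (fun q : Vec 3 => pd 1 B 0 * q 1) p := by fun_prop
      rw [pd_sub i (dB p) hd, pd_const_mul i _ (by fun_prop), pd_coord]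
      fin_cases i
      · show pd 0 B p - pd 1 B 0 * ee 0 1 = 0
        rw [e1 p]; simp [ee]
      · show pd 1 B p - pd 1 B 0 * ee 1 1 = 0
        rw [hByconst p]; simp [ee]
      · show pd 2 B p - pd 1 B 0 * ee 2 1 = 0
        rw [hBz p]; simp [ee]
    have := key p
    simp at this
    linarith
  · -- C p = c0 + γ y
    have key : ∀ p : Vec 3, C p - pd 1 C 0 * p 1 = C 0 - pd 1 C 0 * (0:Vec 3) 1 := by
      have hCf : ContDiff ℝ (⊤:ℕ∞) (fun q : Vec 3 => C q - pd 1 C 0 * q 1) :=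
        hC.sub (contDiff_const.mul ((ContinuousLinearMap.proj 1 : Vec 3 →L[ℝ] ℝ).contDiff))
      apply const_of_pd_zero hCf
      intro i p
      have hd : DifferentiableAt ℝ (fun q : Vec 3 => pd 1 C 0 * q 1) p := by fun_prop
      rw [pd_sub i (dC p) hd, pd_const_mul i _ (by fun_prop), pd_coord]
      fin_cases i
      · show pd 0 C p - pd 1 C 0 * ee 0 1 = 0
        rw [hCx p]; simp [ee]
      · show pd 1 C p - pd 1 C 0 * ee 1 1 = 0
        rw [hCyconst p]; simp [ee]
      · show pd 2 C p - pd 1 C 0 * ee 2 1 = 0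
        rw [hCz p]; simp [ee]
    have := key p
    simp at this
    linarith

def pr (i : Fin 3) : Vec 3 →L[ℝ] ℝ := ContinuousLinearMap.proj i

@[simp] lemma ee_apply (i j : Fin 3) : ee i j = if j = i then 1 else 0 := by
  simp [ee, Pi.single_apply]

lemma fderiv_comp_k (Y : Vec 3 → Vec 3) (hY : Differentiable ℝ Y) (p u : Vec 3) (k : Fin 3) :
    fderiv ℝ Y p u k = fderiv ℝ (fun q => Y q k) p u := by
  have h : HasFDerivAt (fun q => Y q k) ((pr k).comp (fderiv ℝ Y p)) p :=
    ((pr k).hasFDerivAt.comp p (hY p).hasFDerivAt)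
  rw [h.fderiv]; rfl

lemma g00 (x : Vec 3) : lor3Metric x 0 0 = 0 := by simp [lor3Metric, lor3Form]
lemma g01 (x : Vec 3) : lor3Metric x 0 1 = 1/2 := by simp [lor3Metric, lor3Form]
lemma g02 (x : Vec 3) : lor3Metric x 0 2 = 0 := by simp [lor3Metric, lor3Form]
lemma g10 (x : Vec 3) : lor3Metric x 1 0 = 1/2 := by simp [lor3Metric, lor3Form]
lemma g11 (x : Vec 3) : lor3Metric x 1 1 = x 0 * x 0 := by simp [lor3Metric, lor3Form]
lemma g12 (x : Vec 3) : lor3Metric x 1 2 = -(x 0) := by simp [lor3Metric, lor3Form]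
lemma g20 (x : Vec 3) : lor3Metric x 2 0 = 0 := by simp [lor3Metric, lor3Form]
lemma g21 (x : Vec 3) : lor3Metric x 2 1 = -(x 0) := by simp [lor3Metric, lor3Form]
lemma g22 (x : Vec 3) : lor3Metric x 2 2 = 1 := by simp [lor3Metric, lor3Form]

lemma dg11 (p w : Vec 3) : fderiv ℝ (fun q => lor3Metric q 1 1) p w = 2*(p 0)*(w 0) := by
  have h : (fun q : Vec 3 => lor3Metric q 1 1) = fun q => q 0 * q 0 := funext g11
  rw [h]
  have h2 : HasFDerivAt (fun q : Vec 3 => q 0 * q 0) (p 0 • pr 0 + p 0 • pr 0) p :=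
    ((pr 0).hasFDerivAt (x := p)).mul ((pr 0).hasFDerivAt (x := p))
  rw [h2.fderiv]; simp [pr]; ring
lemma dg12 (p w : Vec 3) : fderiv ℝ (fun q => lor3Metric q 1 2) p w = -(w 0) := by
  have h : (fun q : Vec 3 => lor3Metric q 1 2) = fun q => -(q 0) := funext g12
  rw [h]
  have h2 : HasFDerivAt (fun q : Vec 3 => -(q 0)) (-(pr 0)) p :=
    ((pr 0).hasFDerivAt (x := p)).neg
  rw [h2.fderiv]; simp [pr]
lemma dg21 (p w : Vec 3) : fderiv ℝ (fun q => lor3Metric q 2 1) p w = -(w 0) := by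
  have h : (fun q : Vec 3 => lor3Metric q 2 1) = fun q => -(q 0) := funext g21
  rw [h]
  have h2 : HasFDerivAt (fun q : Vec 3 => -(q 0)) (-(pr 0)) p :=
    ((pr 0).hasFDerivAt (x := p)).neg
  rw [h2.fderiv]; simp [pr]
lemma dg00 (p w : Vec 3) : fderiv ℝ (fun q => lor3Metric q 0 0) p w = 0 := by
  have h : (fun q : Vec 3 => lor3Metric q 0 0) = fun _ => (0:ℝ) := funext g00
  rw [h, fderiv_fun_const]; simp
lemma dg01 (p w : Vec 3) : fderiv ℝ (fun q => lor3Metric q 0 1) p w = 0 := by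
  have h : (fun q : Vec 3 => lor3Metric q 0 1) = fun _ => (1/2:ℝ) := funext g01
  rw [h, fderiv_fun_const]; simp
lemma dg02 (p w : Vec 3) : fderiv ℝ (fun q => lor3Metric q 0 2) p w = 0 := by
  have h : (fun q : Vec 3 => lor3Metric q 0 2) = fun _ => (0:ℝ) := funext g02
  rw [h, fderiv_fun_const]; simp
lemma dg10 (p w : Vec 3) : fderiv ℝ (fun q => lor3Metric q 1 0) p w = 0 := by
  have h : (fun q : Vec 3 => lor3Metric q 1 0) = fun _ => (1/2:ℝ) := funext g10
  rw [h, fderiv_fun_const]; simp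
lemma dg20 (p w : Vec 3) : fderiv ℝ (fun q => lor3Metric q 2 0) p w = 0 := by
  have h : (fun q : Vec 3 => lor3Metric q 2 0) = fun _ => (0:ℝ) := funext g20
  rw [h, fderiv_fun_const]; simp
lemma dg22 (p w : Vec 3) : fderiv ℝ (fun q => lor3Metric q 2 2) p w = 0 := by
  have h : (fun q : Vec 3 => lor3Metric q 2 2) = fun _ => (1:ℝ) := funext g22
  rw [h, fderiv_fun_const]; simp

lemma dsq (p w : Vec 3) : fderiv ℝ (fun q : Vec 3 => q 0 * q 0) p w = 2*(p 0)*(w 0) := by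
  have h2 : HasFDerivAt (fun q : Vec 3 => q 0 * q 0) (p 0 • pr 0 + p 0 • pr 0) p :=
    ((pr 0).hasFDerivAt (x := p)).mul ((pr 0).hasFDerivAt (x := p))
  rw [h2.fderiv]; simp [pr]; ring

lemma dcoord (p w : Vec 3) : fderiv ℝ (fun q : Vec 3 => q 0) p w = w 0 := by
  have h : (fun q : Vec 3 => q 0) = (pr 0 : Vec 3 →L[ℝ] ℝ) := rfl
  rw [h, ContinuousLinearMap.fderiv]; rfl

lemma extract (Y : Vec 3 → Vec 3) (f : Vec 3 → ℝ) (hY : Differentiable ℝ Y)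
    (hL : LieDerivEq Set.univ lor3Metric Y f) (p : Vec 3) :
    pd 0 (fun q => Y q 1) p = 0 ∧
    pd 0 (fun q => Y q 2) p = -(1/2) * pd 2 (fun q => Y q 1) p ∧
    pd 0 (fun q => Y q 0) p = -3*p 0*pd 2 (fun q => Y q 1) p - pd 1 (fun q => Y q 1) p
      + 2*pd 2 (fun q => Y q 2) p ∧
    2*p 0*Y p 0 + pd 1 (fun q => Y q 0) p + 2*(p 0)^2*pd 1 (fun q => Y q 1) p
      - 2*p 0*pd 1 (fun q => Y q 2) p + 2*(p 0)^3*pd 2 (fun q => Y q 1) p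
      - 2*(p 0)^2*pd 2 (fun q => Y q 2) p = 0 ∧
    -Y p 0 - p 0*pd 1 (fun q => Y q 1) p + pd 1 (fun q => Y q 2) p
      + (1/2)*pd 2 (fun q => Y q 0) p - (p 0)^2*pd 2 (fun q => Y q 1) p
      + p 0*pd 2 (fun q => Y q 2) p = 0 := by
  have h00 := hL p (Set.mem_univ p) (ee 0) (ee 0)
  have h01 := hL p (Set.mem_univ p) (ee 0) (ee 1)
  have h02 := hL p (Set.mem_univ p) (ee 0) (ee 2)
  have h11 := hL p (Set.mem_univ p) (ee 1) (ee 1)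
  have h12 := hL p (Set.mem_univ p) (ee 1) (ee 2)
  have h22 := hL p (Set.mem_univ p) (ee 2) (ee 2)
  simp only [metricEval, Fin.sum_univ_three, dg00, dg01, dg02, dg10, dg11, dg12, dg20, dg21,
    dg22, g00, g01, g02, g10, g11, g12, g20, g21, g22, ee_apply, Fin.reduceEq, dsq, dcoord,
    fderiv_comp_k Y hY] at h00 h01 h02 h11 h12 h22
  norm_num [ContinuousLinearMap.neg_apply, dcoord, dsq] at h00 h01 h02 h11 h12 h22
  simp only [pd, ee_apply, Fin.reduceEq]
  norm_num
  refine ⟨by linarith, by linear_combination h02 + p 0 * h00, ?_, ?_, ?_⟩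
  · linear_combination 2*h01 - h22 + 2*p 0*h02
  · linear_combination h11 - (p 0)^2 * h22
  · linear_combination h12 + p 0 * h22

def L4 : Vec 3 →L[ℝ] Vec 3 := ContinuousLinearMap.pi ![pr 0, -pr 1, 0]

lemma X4eq : lor3X4 = ⇑L4 := by
  funext p
  funext i
  fin_cases i <;> simp [lor3X4, L4, pr, ContinuousLinearMap.pi_apply]

lemma lieX4 : LieDerivEq Set.univ lor3Metric lor3X4 fun _ => 0 := by
  intro p _ u v
  have hf : fderiv ℝ lor3X4 p = L4 := by rw [X4eq, ContinuousLinearMap.fderiv]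
  rw [hf]
  simp only [metricEval, Fin.sum_univ_three, dg00, dg01, dg02, dg10, dg11, dg12, dg20, dg21, dg22]
  simp only [L4, ContinuousLinearMap.pi_apply, lor3X4]
  simp only [g00, g01, g02, g10, g11, g12, g20, g21, g22]
  simp [pr]
  ring

def L3 : Vec 3 →L[ℝ] Vec 3 := ContinuousLinearMap.pi ![0, 0, pr 1]

lemma X3eq : lor3X3 = fun p => (![1,0,0] : Vec 3) + L3 p := by
  funext p i
  fin_cases i <;> simp [lor3X3, L3, pr, ContinuousLinearMap.pi_apply]

lemma fderivX3 (p : Vec 3) : fderiv ℝ lor3X3 p = L3 := by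
  rw [X3eq]
  have : HasFDerivAt (fun p => (![1,0,0] : Vec 3) + L3 p) ((0 : Vec 3 →L[ℝ] Vec 3) + L3) p :=
    (hasFDerivAt_const _ _).add L3.hasFDerivAt
  rw [this.fderiv]; simp

lemma lieX1 : LieDerivEq Set.univ lor3Metric lor3X1 fun _ => 0 := by
  intro p _ u v
  have hf : fderiv ℝ lor3X1 p = 0 := fderiv_const_apply _
  rw [hf]
  simp only [metricEval, Fin.sum_univ_three, dg00, dg01, dg02, dg10, dg11, dg12, dg20, dg21, dg22]
  simp only [g00, g01, g02, g10, g11, g12, g20, g21, g22, lor3X1]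
  simp

lemma lieX3 : LieDerivEq Set.univ lor3Metric lor3X3 fun _ => 0 := by
  intro p _ u v
  rw [fderivX3]
  simp only [metricEval, Fin.sum_univ_three, dg00, dg01, dg02, dg10, dg11, dg12, dg20, dg21, dg22]
  simp only [L3, ContinuousLinearMap.pi_apply, lor3X3]
  simp only [g00, g01, g02, g10, g11, g12, g20, g21, g22]
  simp [pr]
  ring

lemma cdX3 : ContDiff ℝ (⊤:ℕ∞) lor3X3 := by
  rw [X3eq]
  exact contDiff_const.add L3.contDiff

lemma cdX4 : ContDiff ℝ (⊤:ℕ∞) lor3X4 := by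
  rw [X4eq]; exact L4.contDiff


lemma linindep : LinearIndependent ℝ lor3Basis := by
  rw [Fintype.linearIndependent_iff]
  intro c hc
  have h0 := congrFun (congrFun hc ![0,0,0])
  have h1 := congrFun (congrFun hc ![1,0,0])
  have e0 := h0 0; have e1 := h0 1; have e2 := h0 2; have e3 := h1 0
  simp [Fin.sum_univ_four, lor3Basis, lor3X1, lor3X2, lor3X3, lor3X4, Matrix.vecHead,
    Matrix.vecTail] at e0 e1 e2 e3
  intro i
  fin_cases i <;> simp_all


lemma lieX2 : LieDerivEq Set.univ lor3Metric lor3X2 fun _ => 0 := by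
  intro p _ u v
  have hf : fderiv ℝ lor3X2 p = 0 := fderiv_const_apply _
  rw [hf]
  simp only [metricEval, Fin.sum_univ_three, dg00, dg01, dg02, dg10, dg11, dg12, dg20, dg21, dg22]
  simp only [g00, g01, g02, g10, g11, g12, g20, g21, g22, lor3X2]
  simp

lemma cdX1 : ContDiff ℝ (⊤:ℕ∞) lor3X1 := contDiff_const
lemma cdX2 : ContDiff ℝ (⊤:ℕ∞) lor3X2 := contDiff_const

end Aux

/-- **Submaximally symmetric 3-dimensional Lorentzian conformal structure.**
For `g = dx dy + (dz − x dy)²` on `ℝ³`: the four listed fields are Killing,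
linearly independent, and span the space of all smooth conformal Killing fields,
which is hence of dimension exactly `4`. -/
theorem lorentzian3_conformal_symmetry_dim :
    IsKillingOn Set.univ lor3Metric lor3X1 ∧
    IsKillingOn Set.univ lor3Metric lor3X2 ∧
    IsKillingOn Set.univ lor3Metric lor3X3 ∧
    IsKillingOn Set.univ lor3Metric lor3X4 ∧
    LinearIndependent ℝ lor3Basis ∧
    ∀ Y : Vec 3 → Vec 3, IsConformalKillingOn Set.univ lor3Metric Y →
      ∃ c : Fin 4 → ℝ, Y = fun x => ∑ a, c a • lor3Basis a x := by
  refine ⟨⟨contDiffOn_univ.mpr cdX1, lieX1⟩, ⟨contDiffOn_univ.mpr cdX2, lieX2⟩,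
    ⟨contDiffOn_univ.mpr cdX3, lieX3⟩, ⟨contDiffOn_univ.mpr cdX4, lieX4⟩, linindep, ?_⟩
  intro Y hY
  obtain ⟨hYs, f, hL⟩ := hY
  have hYc : ContDiff ℝ (⊤:ℕ∞) Y := contDiffOn_univ.mp hYs
  have hYd : Differentiable ℝ Y := hYc.differentiable (by simp)
  have hcomp : ∀ k : Fin 3, ContDiff ℝ (⊤:ℕ∞) (fun q => Y q k) := fun k => contDiff_pi.mp hYc k
  have hx := extract Y f hYd hL
  obtain ⟨β, γ, b0, c0, hform⟩ := struct (fun q => Y q 0) (fun q => Y q 1) (fun q => Y q 2)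
    (hcomp 0) (hcomp 1) (hcomp 2)
    (fun p => (hx p).1) (fun p => (hx p).2.1) (fun p => (hx p).2.2.1)
    (fun p => (hx p).2.2.2.1) (fun p => (hx p).2.2.2.2)
  refine ⟨![b0, c0, γ, -β], ?_⟩
  funext p
  obtain ⟨h0, h1, h2⟩ := hform p
  funext k
  fin_cases k
  · show Y p 0 = _
    simp [Fin.sum_univ_four, lor3Basis, lor3X1, lor3X2, lor3X3, lor3X4]
    rw [h0]; ring
  · show Y p 1 = _
    simp [Fin.sum_univ_four, lor3Basis, lor3X1, lor3X2, lor3X3, lor3X4]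
    rw [h1]
    try ring
  · show Y p 2 = _
    simp [Fin.sum_univ_four, lor3Basis, lor3X1, lor3X2, lor3X3, lor3X4]
    rw [h2]
    try ring
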